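/- Let ζ>0 and let ρ be a finite Borel measure on ℝ supported on [0,1] with ρ({0})=0 and ρ((0,λ]) ≤ λ^ζ for all λ ∈ [0,1]. Then there exists a constant C, depending only on ζ, such that for all n ≥ 2, the infimum over all real polynomials q with deg q ≤ n and q(0)=1 of (1/2)∫_{[0,1]} q(λ)² ρ(dλ) is at most C·n^{-2ζ}·(log n)^{2ζ}. -/

import Mathlib

open MeasureTheory Filter Set Polynomial

/-- Chebyshev T evaluated at cosh. -/
lemma cg_T_real_cosh (t : ℝ) (n : ℤ) :
    (Polynomial.Chebyshev.T ℝ n).eval (Real.cosh t) = Real.cosh (n * t) := by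
  apply Complex.ofReal_injective
  rw [Polynomial.Chebyshev.complex_ofReal_eval_T, Complex.ofReal_cosh, Complex.ofReal_cosh,
    ← Complex.cos_mul_I, Polynomial.Chebyshev.T_complex_cos, ← Complex.cos_mul_I]
  push_cast
  ring_nf

lemma cg_T_natDegree_le (k : ℕ) : (Polynomial.Chebyshev.T ℝ (k : ℤ)).natDegree ≤ k := by
  induction k using Nat.strong_induction_on with
  | _ k ih =>
    match k with
    | 0 => simp [Polynomial.Chebyshev.T_zero]
    | 1 => simp [Polynomial.Chebyshev.T_one]
    | (k+2) =>
      have hcast : ((k + 2 : ℕ) : ℤ) = (k : ℤ) + 2 := by push_cast; ring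
      rw [hcast, Polynomial.Chebyshev.T_add_two]
      refine (Polynomial.natDegree_sub_le _ _).trans ?_
      have h1 : (2 * Polynomial.X * Polynomial.Chebyshev.T ℝ ((k:ℤ) + 1)).natDegree ≤ k + 2 := by
        refine (Polynomial.natDegree_mul_le).trans ?_
        have h2 : (2 * Polynomial.X : Polynomial ℝ).natDegree ≤ 1 :=
          (Polynomial.natDegree_mul_le).trans (by simp)
        have h3 : (Polynomial.Chebyshev.T ℝ ((k:ℤ) + 1)).natDegree ≤ k + 1 := by
          have := ih (k+1) (by omega)
          rwa [show ((k + 1 : ℕ) : ℤ) = (k : ℤ) + 1 by push_cast; ring] at this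
        omega
      have h4 : (Polynomial.Chebyshev.T ℝ (k:ℤ)).natDegree ≤ k := ih k (by omega)
      omega

lemma cg_cosh_log_eq (x : ℝ) (hx : 1 ≤ x) :
    Real.cosh (Real.log (x + Real.sqrt (x ^ 2 - 1))) = x := by
  have hs : Real.sqrt (x ^ 2 - 1) ^ 2 = x ^ 2 - 1 := Real.sq_sqrt (by nlinarith)
  have hsn : 0 ≤ Real.sqrt (x ^ 2 - 1) := Real.sqrt_nonneg _
  have hr : 0 < x + Real.sqrt (x ^ 2 - 1) := by linarith
  rw [Real.cosh_eq, Real.exp_log hr, Real.exp_neg, Real.exp_log hr]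
  rw [div_eq_iff (two_ne_zero), inv_eq_one_div]
  field_simp
  nlinarith [hs]

lemma cg_a_le_sq (t : ℝ) (ht : 0 ≤ t) :
    (Real.cosh t - 1) / (Real.cosh t + 1) ≤ t ^ 2 := by
  have h1 : (0:ℝ) < Real.cosh t + 1 := by positivity
  rw [div_le_iff₀ h1]
  have hp : (0:ℝ) < Real.exp t := Real.exp_pos t
  have hp1 : (1:ℝ) ≤ Real.exp t := Real.one_le_exp ht
  have he : Real.exp t - 1 ≤ t * Real.exp t := by
    have h := Real.add_one_le_exp (-t)
    rw [Real.exp_neg] at h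
    have := (mul_le_mul_of_nonneg_right h hp.le)
    rw [inv_mul_cancel₀ hp.ne'] at this
    nlinarith
  rw [Real.cosh_eq, Real.exp_neg]
  set E := Real.exp t with hE
  have hinv : E⁻¹ * E = 1 := inv_mul_cancel₀ hp.ne'
  have hinv2 : E⁻¹ * E ^ 2 = E := by rw [sq, ← mul_assoc, hinv, one_mul]
  have hinvpos : 0 < E⁻¹ := by positivity
  have key : (E - 1) ^ 2 ≤ t ^ 2 * E ^ 2 := by nlinarith [mul_self_le_mul_self (by linarith : (0:ℝ) ≤ E - 1) he]
  have h5 : E⁻¹ * (E - 1) ^ 2 ≤ E⁻¹ * (t ^ 2 * E ^ 2) := mul_le_mul_of_nonneg_left key hinvpos.le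
  nlinarith [h5, hinv, hinv2, mul_nonneg (sq_nonneg t) hinvpos.le, sq_nonneg t]

theorem cg_chebyshev_upper_bound (ζ : ℝ) (hζ : 0 < ζ) :
    ∃ C : ℝ, ∀ ρ : Measure ℝ, IsFiniteMeasure ρ →
      ρ (Set.Icc (0:ℝ) 1)ᶜ = 0 → ρ {(0:ℝ)} = 0 →
      (∀ l ∈ Set.Icc (0:ℝ) 1, (ρ (Set.Ioc 0 l)).toReal ≤ l ^ ζ) →
      ∀ n : ℕ, 2 ≤ n →
        sInf {L : ℝ | ∃ q : Polynomial ℝ, q.natDegree ≤ n ∧ q.eval 0 = 1 ∧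
            L = (1/2) * ∫ l in Set.Icc (0:ℝ) 1, (q.eval l) ^ 2 ∂ρ} ≤
          C * (n : ℝ) ^ (-(2 * ζ)) * (Real.log n) ^ (2 * ζ) := by
  refine ⟨(2*ζ)^(2*ζ) + 4, ?_⟩
  intro ρ hfin hsupp h0 hpow n hn
  have hn2 : (2:ℝ) ≤ (n:ℝ) := by exact_mod_cast hn
  have hn0 : (0:ℝ) < n := by linarith
  have hlog2 : (0.6931471803 : ℝ) < Real.log 2 := Real.log_two_gt_d9
  have hlogn : Real.log 2 ≤ Real.log n := Real.log_le_log (by norm_num) hn2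
  have hlogpos : (0:ℝ) < Real.log n := by linarith
  set t : ℝ := 2 * ζ * Real.log n / n with ht_def
  have ht : 0 < t := by positivity
  set ch : ℝ := Real.cosh t with hch_def
  have hch1 : 1 < ch := Real.one_lt_cosh.mpr ht.ne'
  have hch0 : 0 < ch + 1 := by linarith
  set a : ℝ := (ch - 1)/(ch + 1) with ha_def
  have ha0 : 0 < a := div_pos (by linarith) hch0
  have ha1 : a < 1 := by rw [div_lt_one hch0]; linarith
  have haa : (ch + 1) * a = ch - 1 := by rw [ha_def]; field_simp
  set D : ℝ := Real.cosh ((n : ℝ) * t) with hD_def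
  have hD1 : 1 ≤ D := Real.one_le_cosh _
  have hD0 : 0 < D := lt_of_lt_of_le one_pos hD1
  -- the polynomial
  set q : Polynomial ℝ := Polynomial.C D⁻¹ *
    ((Polynomial.Chebyshev.T ℝ n).comp
      (Polynomial.C ch - Polynomial.C (ch+1) * Polynomial.X)) with hq_def
  have hqeval : ∀ l : ℝ, q.eval l
      = D⁻¹ * (Polynomial.Chebyshev.T ℝ n).eval (ch - (ch+1)*l) := by
    intro l; simp [hq_def, Polynomial.eval_comp]
  have hdeg : q.natDegree ≤ n := by
    refine (Polynomial.natDegree_C_mul_le _ _).trans ?_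
    refine (Polynomial.natDegree_comp_le).trans ?_
    have hlin : (Polynomial.C ch - Polynomial.C (ch+1) * Polynomial.X : Polynomial ℝ).natDegree ≤ 1 := by
      refine (Polynomial.natDegree_sub_le _ _).trans ?_
      simp only [Polynomial.natDegree_C, max_le_iff]
      exact ⟨Nat.zero_le _, (Polynomial.natDegree_C_mul_le _ _).trans (by simp)⟩
    calc (Polynomial.Chebyshev.T ℝ n).natDegree *
          (Polynomial.C ch - Polynomial.C (ch+1) * Polynomial.X : Polynomial ℝ).natDegree
        ≤ n * 1 := Nat.mul_le_mul (cg_T_natDegree_le n) hlin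
      _ = n := by ring
  have hq0 : q.eval 0 = 1 := by
    have h := hqeval 0
    rw [mul_zero, sub_zero] at h
    rw [h, hch_def, cg_T_real_cosh,
      show ((n:ℤ):ℝ) * t = (n:ℝ) * t by push_cast; ring]
    exact inv_mul_cancel₀ hD0.ne'
  -- pointwise bounds
  have hbound1 : ∀ l ∈ Set.Icc (0:ℝ) a, |q.eval l| ≤ 1 := by
    intro l hl
    obtain ⟨hl0, hla⟩ := hl
    set s := ch - (ch+1)*l with hs_def
    have hs1 : 1 ≤ s := by
      have h := mul_le_mul_of_nonneg_left hla hch0.le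
      rw [haa] at h
      simp only [hs_def]; linarith
    have hsch : s ≤ ch := by
      have := mul_nonneg hch0.le hl0
      simp only [hs_def]; linarith
    set u := Real.log (s + Real.sqrt (s ^ 2 - 1)) with hu_def
    have hcu : Real.cosh u = s := cg_cosh_log_eq s hs1
    have hut : |u| ≤ |t| := by
      rw [← Real.cosh_le_cosh, hcu]; exact hsch
    have hnut : Real.cosh ((n:ℝ)*u) ≤ D := by
      rw [hD_def, Real.cosh_le_cosh, abs_mul, abs_mul]
      exact mul_le_mul_of_nonneg_left hut (abs_nonneg _)
    rw [hqeval l, ← hs_def, ← hcu, cg_T_real_cosh,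
      show ((n:ℤ):ℝ) * u = (n:ℝ) * u by push_cast; ring]
    rw [abs_mul, abs_inv, abs_of_pos hD0, abs_of_pos (Real.cosh_pos _)]
    rw [inv_mul_le_iff₀ hD0, mul_one]
    exact hnut
  have hbound2 : ∀ l ∈ Set.Ioc a 1, |q.eval l| ≤ D⁻¹ := by
    intro l hl
    obtain ⟨hla, hl1⟩ := hl
    set s := ch - (ch+1)*l with hs_def
    have hs_le : s ≤ 1 := by
      have h := mul_le_mul_of_nonneg_left hla.le hch0.le
      rw [haa] at h
      simp only [hs_def]; linarith
    have hs_ge : -1 ≤ s := by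
      have h := mul_le_mul_of_nonneg_left hl1 hch0.le
      simp only [hs_def]; nlinarith
    have hcos : Real.cos (Real.arccos s) = s := Real.cos_arccos hs_ge hs_le
    rw [hqeval l, ← hs_def, ← hcos, Polynomial.Chebyshev.T_real_cos]
    rw [abs_mul, abs_inv, abs_of_pos hD0]
    have : |Real.cos ((n:ℤ) * Real.arccos s)| ≤ 1 := Real.abs_cos_le_one _
    calc D⁻¹ * |Real.cos ((n:ℤ) * Real.arccos s)| ≤ D⁻¹ * 1 :=
          mul_le_mul_of_nonneg_left this (by positivity)
      _ = D⁻¹ := mul_one _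
  -- integrability and splitting
  have hcont : Continuous (fun l : ℝ => (q.eval l)^2) := by
    exact (q.continuous_aeval).pow 2
  have hint1 : IntegrableOn (fun l : ℝ => (q.eval l)^2) (Set.Icc 0 a) ρ :=
    hcont.integrableOn_Icc
  have hint2 : IntegrableOn (fun l : ℝ => (q.eval l)^2) (Set.Ioc a 1) ρ :=
    hcont.integrableOn_Ioc
  have hsplit : ∫ l in Set.Icc (0:ℝ) 1, (q.eval l)^2 ∂ρ
      = (∫ l in Set.Icc (0:ℝ) a, (q.eval l)^2 ∂ρ)
        + ∫ l in Set.Ioc a 1, (q.eval l)^2 ∂ρ := by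
    rw [← Set.Icc_union_Ioc_eq_Icc ha0.le ha1.le]
    exact setIntegral_union (Set.disjoint_left.mpr (fun x hx hx' => absurd hx.2 (not_le.mpr hx'.1))) measurableSet_Ioc hint1 hint2
  -- measure bounds
  have hmeas1 : (ρ (Set.Icc (0:ℝ) a)).toReal ≤ a ^ ζ := by
    have hsub : Set.Icc (0:ℝ) a ⊆ {0} ∪ Set.Ioc 0 a := by
      intro x ⟨hx0, hxa⟩
      rcases eq_or_lt_of_le hx0 with h | h
      · exact Or.inl (by simp [← h])
      · exact Or.inr ⟨h, hxa⟩
    have h1 : ρ (Set.Icc (0:ℝ) a) ≤ ρ (Set.Ioc 0 a) := by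
      calc ρ (Set.Icc (0:ℝ) a) ≤ ρ ({0} ∪ Set.Ioc 0 a) := measure_mono hsub
        _ ≤ ρ {0} + ρ (Set.Ioc 0 a) := measure_union_le _ _
        _ = ρ (Set.Ioc 0 a) := by rw [h0, zero_add]
    calc (ρ (Set.Icc (0:ℝ) a)).toReal ≤ (ρ (Set.Ioc (0:ℝ) a)).toReal :=
          ENNReal.toReal_mono (measure_ne_top ρ _) h1
      _ ≤ a ^ ζ := hpow a ⟨ha0.le, ha1.le⟩
  have hmeas2 : (ρ (Set.Ioc a 1)).toReal ≤ 1 := by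
    calc (ρ (Set.Ioc a 1)).toReal ≤ (ρ (Set.Ioc (0:ℝ) 1)).toReal :=
          ENNReal.toReal_mono (measure_ne_top ρ _) (measure_mono (Set.Ioc_subset_Ioc ha0.le le_rfl))
      _ ≤ (1:ℝ) ^ ζ := hpow 1 ⟨zero_le_one, le_rfl⟩
      _ = 1 := Real.one_rpow ζ
  -- integral bounds
  have hI1 : ∫ l in Set.Icc (0:ℝ) a, (q.eval l)^2 ∂ρ ≤ a ^ ζ := by
    have h := norm_setIntegral_le_of_norm_le_const (μ := ρ) (s := Set.Icc (0:ℝ) a)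
      (f := fun l => (q.eval l)^2) (C := 1) (measure_lt_top ρ _)
      (fun x hx => by
        rw [Real.norm_eq_abs, abs_pow]
        calc |q.eval x| ^ 2 ≤ 1 ^ 2 := pow_le_pow_left₀ (abs_nonneg _) (hbound1 x hx) 2
          _ = 1 := one_pow 2)
    rw [Real.norm_eq_abs] at h
    calc ∫ l in Set.Icc (0:ℝ) a, (q.eval l)^2 ∂ρ
        ≤ |∫ l in Set.Icc (0:ℝ) a, (q.eval l)^2 ∂ρ| := le_abs_self _
      _ ≤ 1 * (ρ (Set.Icc (0:ℝ) a)).toReal := h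
      _ ≤ a ^ ζ := by rw [one_mul]; exact hmeas1
  have hI2 : ∫ l in Set.Ioc a 1, (q.eval l)^2 ∂ρ ≤ (D⁻¹) ^ 2 := by
    have h := norm_setIntegral_le_of_norm_le_const (μ := ρ) (s := Set.Ioc a (1:ℝ))
      (f := fun l => (q.eval l)^2) (C := (D⁻¹)^2) (measure_lt_top ρ _)
      (fun x hx => by
        rw [Real.norm_eq_abs, abs_pow]
        exact pow_le_pow_left₀ (abs_nonneg _) (hbound2 x hx) 2)
    rw [Real.norm_eq_abs] at h
    calc ∫ l in Set.Ioc a (1:ℝ), (q.eval l)^2 ∂ρ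
        ≤ |∫ l in Set.Ioc a (1:ℝ), (q.eval l)^2 ∂ρ| := le_abs_self _
      _ ≤ (D⁻¹)^2 * (ρ (Set.Ioc a (1:ℝ))).toReal := h
      _ ≤ (D⁻¹)^2 * 1 := mul_le_mul_of_nonneg_left hmeas2 (by positivity)
      _ = (D⁻¹)^2 := mul_one _
  -- numeric bounds
  have hB0 : 0 < (n:ℝ) ^ (-(2*ζ)) * (Real.log n) ^ (2*ζ) := by
    have h1 := Real.rpow_pos_of_pos hn0 (-(2*ζ))
    have h2 := Real.rpow_pos_of_pos hlogpos (2*ζ)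
    positivity
  have hnum1 : a ^ ζ ≤ (2*ζ)^(2*ζ) * ((n:ℝ) ^ (-(2*ζ)) * (Real.log n) ^ (2*ζ)) := by
    have hat : a ≤ t ^ 2 := by
      rw [ha_def, hch_def]; exact cg_a_le_sq t ht.le
    calc a ^ ζ ≤ (t ^ 2) ^ ζ := Real.rpow_le_rpow ha0.le hat hζ.le
      _ = t ^ (2*ζ) := by
          rw [← Real.rpow_natCast t 2, ← Real.rpow_mul ht.le]
          norm_num
      _ = (2*ζ*(Real.log n / n)) ^ (2*ζ) := by rw [ht_def, mul_div_assoc]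
      _ = (2*ζ)^(2*ζ) * (Real.log n / n)^(2*ζ) := by
          rw [Real.mul_rpow (by positivity) (by positivity)]
      _ = (2*ζ)^(2*ζ) * ((Real.log n)^(2*ζ) / (n:ℝ)^(2*ζ)) := by
          rw [Real.div_rpow hlogpos.le hn0.le]
      _ = (2*ζ)^(2*ζ) * ((n:ℝ) ^ (-(2*ζ)) * (Real.log n) ^ (2*ζ)) := by
          rw [Real.rpow_neg hn0.le, div_eq_mul_inv, mul_comm ((Real.log n)^(2*ζ))]
  have hnt : (n:ℝ) * t = 2*ζ*Real.log n := by
    rw [ht_def]; field_simp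
  have hN0 : (0:ℝ) < (n:ℝ) ^ (2*ζ) := Real.rpow_pos_of_pos hn0 _
  have hDge : (n:ℝ) ^ (2*ζ) / 2 ≤ D := by
    rw [hD_def, hnt, Real.cosh_eq]
    have h1 : (n:ℝ) ^ (2*ζ) = Real.exp (2*ζ*Real.log n) := by
      rw [Real.rpow_def_of_pos hn0, mul_comm (Real.log n)]
    rw [h1]
    have := Real.exp_pos (-(2*ζ*Real.log n))
    linarith
  have hnum2 : (D⁻¹) ^ 2 ≤ 4 * ((n:ℝ) ^ (-(2*ζ)) * (Real.log n) ^ (2*ζ)) := by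
    have hinv : D⁻¹ ≤ 2 * ((n:ℝ) ^ (2*ζ))⁻¹ := by
      have h2 : ((n:ℝ) ^ (2*ζ) / 2)⁻¹ = 2 * ((n:ℝ) ^ (2*ζ))⁻¹ := by
        rw [div_eq_mul_inv, mul_inv, inv_inv, mul_comm]
      calc D⁻¹ ≤ ((n:ℝ) ^ (2*ζ) / 2)⁻¹ := inv_anti₀ (by positivity) hDge
        _ = 2 * ((n:ℝ) ^ (2*ζ))⁻¹ := h2
    have hneg : ((n:ℝ) ^ (2*ζ))⁻¹ = (n:ℝ) ^ (-(2*ζ)) := (Real.rpow_neg hn0.le _).symm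
    have hlt : (n:ℝ) ^ (-(2*ζ)) ≤ (Real.log n) ^ (2*ζ) := by
      have hninv : ((n:ℝ)⁻¹) ≤ Real.log n := by
        have : (n:ℝ)⁻¹ ≤ 2⁻¹ := by
          rw [inv_le_inv₀ hn0 two_pos]; exact hn2
        norm_num at this ⊢; linarith
      calc (n:ℝ) ^ (-(2*ζ)) = ((n:ℝ)⁻¹) ^ (2*ζ) := by
            rw [Real.inv_rpow hn0.le, Real.rpow_neg hn0.le]
        _ ≤ (Real.log n) ^ (2*ζ) :=
            Real.rpow_le_rpow (by positivity) hninv (by positivity)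
    have hD2 : (D⁻¹)^2 ≤ (2 * ((n:ℝ) ^ (2*ζ))⁻¹)^2 :=
      pow_le_pow_left₀ (by positivity) hinv 2
    have hx0 : (0:ℝ) ≤ (n:ℝ) ^ (-(2*ζ)) := (Real.rpow_pos_of_pos hn0 _).le
    calc (D⁻¹)^2 ≤ (2 * ((n:ℝ) ^ (2*ζ))⁻¹)^2 := hD2
      _ = 4 * ((n:ℝ) ^ (-(2*ζ)) * (n:ℝ) ^ (-(2*ζ))) := by rw [hneg]; ring
      _ ≤ 4 * ((n:ℝ) ^ (-(2*ζ)) * (Real.log n) ^ (2*ζ)) := by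
          have := mul_le_mul_of_nonneg_left hlt hx0
          linarith
  -- conclusion
  refine le_trans (csInf_le ?_ ⟨q, hdeg, hq0, rfl⟩) ?_
  · refine ⟨0, fun L hL => ?_⟩
    obtain ⟨p, -, -, rfl⟩ := hL
    have : 0 ≤ ∫ l in Set.Icc (0:ℝ) 1, (p.eval l)^2 ∂ρ :=
      setIntegral_nonneg measurableSet_Icc (fun x _ => sq_nonneg _)
    linarith
  · rw [hsplit, mul_assoc]
    have hP : (0:ℝ) ≤ (2*ζ)^(2*ζ) := (Real.rpow_pos_of_pos (by linarith) _).le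
    nlinarith [hI1, hI2, hnum1, hnum2, hB0, mul_nonneg hP hB0.le]
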